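/- Let N be a normal subgroup of a finite group G that is hypercentral in G, i.e., Γ^r_G(N) = 1 for some r, where Γ¹_G(N) = N and Γ^{i+1}_G(N) = [Γ^i_G(N), G]. Then [G,N] is contained in Φ(G) ∩ N, where Φ(G) is the Frattini subgroup of G. -/

import Mathlib

open scoped Classical
set_option linter.unusedSectionVars false

noncomputable section

namespace CT

variable {G : Type} [Group G] [Fintype G]

/-- `χ` is the character of an irreducible (simple) finite-dimensional complex
representation of `G`. -/
def IsIrrChar (G : Type) [Group G] (χ : G → ℂ) : Prop :=
  ∃ V : FDRep ℂ G, CategoryTheory.Simple V ∧ χ = V.character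

/-- The conjugate character `θ^g`, given by `θ^g (n) = θ (g n g⁻¹)`. -/
def conjChar (N : Subgroup G) [hN : N.Normal] (θ : ↥N → ℂ) (g : G) : ↥N → ℂ :=
  fun n => θ ⟨g * (n : G) * g⁻¹, hN.conj_mem _ n.2 g⟩

lemma conjChar_one (N : Subgroup G) [N.Normal] (θ : ↥N → ℂ) :
    conjChar N θ 1 = θ := by
  funext n; simp [conjChar]

lemma conjChar_mul (N : Subgroup G) [N.Normal] (θ : ↥N → ℂ) (a b : G) :
    conjChar N θ (a * b) = conjChar N (conjChar N θ a) b := by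
  funext n
  simp only [conjChar, Subtype.coe_mk]
  congr 1
  ext
  simp [mul_assoc]

/-- `θ` is a `G`-invariant character of `N`. -/
def IsInv (N : Subgroup G) [N.Normal] (θ : ↥N → ℂ) : Prop :=
  ∀ g : G, conjChar N θ g = θ

/-- The inertia subgroup `I_G(θ)` of a character `θ` of `N` in `G`. -/
def inertia (N : Subgroup G) [N.Normal] (θ : ↥N → ℂ) : Subgroup G where
  carrier := {g : G | conjChar N θ g = θ}
  one_mem' := conjChar_one N θ
  mul_mem' := by
    intro a b ha hb
    show conjChar N θ (a * b) = θ
    rw [conjChar_mul, ha, hb]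
  inv_mem' := by
    intro a ha
    show conjChar N θ a⁻¹ = θ
    have h := conjChar_mul N θ a a⁻¹
    rw [mul_inv_cancel, conjChar_one, ha] at h
    exact h.symm

/-- The minimal `G`-invariant character `θ̂` of `N` over `θ`: the sum of the
distinct `G`-conjugates of `θ`. -/
def hat (N : Subgroup G) [N.Normal] (θ : ↥N → ℂ) : ↥N → ℂ :=
  fun n => ∑ f ∈ Finset.univ.image (fun g : G => conjChar N θ g), f n

/-- The usual inner product of class functions. -/
def inner' (α : Type*) [Fintype α] (f h : α → ℂ) : ℂ :=
  (Fintype.card α : ℂ)⁻¹ * ∑ x, f x * (starRingEnd ℂ) (h x)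

/-- `χ ∈ Irr(G | θ)` : the restriction of `χ` to `N` has `θ` as a constituent. -/
def Over (N : Subgroup G) (χ : G → ℂ) (θ : ↥N → ℂ) : Prop :=
  inner' ↥N (fun n => χ ↑n) θ ≠ 0

/-- The character of `N` induced from a character `lam` of `H ≤ N`. -/
def ind (H N : Subgroup G) (lam : ↥H → ℂ) : ↥N → ℂ :=
  fun n => (Fintype.card ↥H : ℂ)⁻¹ *
    ∑ x : ↥N, if h : (x : G) * (n : G) * (x : G)⁻¹ ∈ H then lam ⟨_, h⟩ else 0

/-- The character of `G` induced from a character `lam` of `H`. -/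
def indG (H : Subgroup G) (lam : ↥H → ℂ) : G → ℂ :=
  fun g => (Fintype.card ↥H : ℂ)⁻¹ *
    ∑ x : G, if h : x * g * x⁻¹ ∈ H then lam ⟨_, h⟩ else 0

/-- The lower central `G`-series of `N` : `gammaG N k = Γ^{k+1}_G(N)`, so
`gammaG N 0 = N` and `gammaG N (k+1) = [gammaG N k, G]`. -/
def gammaG (N : Subgroup G) : ℕ → Subgroup G
  | 0 => N
  | (k + 1) => ⁅gammaG N k, (⊤ : Subgroup G)⁆

/-- The upper central `G`-series of `N` (as subsets of `G`):
`zUpper N 0 = 1` and `zUpper N (k+1)` is the preimage in `N` of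
`Z(G/Z^k) ∩ N/Z^k`, i.e. the set of `x ∈ N` all of whose commutators with
elements of `G` lie in `zUpper N k`. -/
def zUpper (N : Subgroup G) : ℕ → Set G
  | 0 => {1}
  | (k + 1) => {x : G | x ∈ N ∧ ∀ y : G, x * y * x⁻¹ * y⁻¹ ∈ zUpper N k}

end CT

namespace CT

open scoped Pointwise
open scoped commutatorElement

private lemma key_lemma {G : Type} [Group G] {M Γ : Subgroup G} (hM : IsCoatom M) [hΓn : Γ.Normal]
    (hΓ : ¬ Γ ≤ M) (hc : ⁅Γ, (⊤ : Subgroup G)⁆ ≤ M) :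
    ⁅(⊤ : Subgroup G), (⊤ : Subgroup G)⁆ ≤ M := by
  have hsup : M ⊔ Γ = ⊤ := by
    refine hM.2 _ (lt_of_le_of_ne le_sup_left fun e => hΓ ?_)
    rw [e]; exact le_sup_right
  have hconj : ∀ γ ∈ Γ, ∀ m ∈ M, γ * m * γ⁻¹ ∈ M := by
    intro γ hγ m hm
    have h1 : ⁅γ, m⁆ ∈ M := hc (Subgroup.commutator_mem_commutator hγ (Subgroup.mem_top m))
    have : γ * m * γ⁻¹ = ⁅γ, m⁆ * m := by group
    rw [this]; exact mul_mem h1 hm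
  have hnorm : M.Normal := by
    rw [← Subgroup.normalizer_eq_top_iff, eq_top_iff, ← hsup]
    refine sup_le Subgroup.le_normalizer fun γ hγ => ?_
    rw [Subgroup.mem_normalizer_iff]
    intro m
    constructor
    · exact hconj γ hγ m
    · intro hm
      have h2 := hconj γ⁻¹ (inv_mem hγ) _ hm
      simpa [mul_assoc] using h2
  let φ := QuotientGroup.mk' M
  have hsurj : ∀ a : G, ∃ γ ∈ Γ, φ γ = φ a := by
    intro a
    have ha : a ∈ ((M : Set G) * (Γ : Set G)) := by
      rw [← Subgroup.mul_normal, hsup]; exact Subgroup.mem_top a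
    obtain ⟨m, hm, γ, hγ, rfl⟩ := ha
    refine ⟨γ, hγ, ?_⟩
    show QuotientGroup.mk γ = QuotientGroup.mk (m * γ)
    rw [QuotientGroup.eq]
    simpa [mul_assoc] using hnorm.conj_mem m hm γ⁻¹
  rw [Subgroup.commutator_le]
  intro a _ b _
  obtain ⟨γ₁, hγ₁, e₁⟩ := hsurj a
  obtain ⟨γ₂, hγ₂, e₂⟩ := hsurj b
  have hmem : ⁅γ₁, γ₂⁆ ∈ M := hc (Subgroup.commutator_mem_commutator hγ₁ (Subgroup.mem_top γ₂))
  have : φ ⁅a, b⁆ = 1 := by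
    rw [map_commutatorElement, ← e₁, ← e₂, ← map_commutatorElement]
    rwa [← MonoidHom.mem_ker, QuotientGroup.ker_mk'] at *
  rwa [← MonoidHom.mem_ker, QuotientGroup.ker_mk'] at this


private lemma gammaG_normal {G : Type} [Group G] [Fintype G] (N : Subgroup G) [N.Normal] :
    ∀ k, (gammaG N k).Normal := by
  intro k
  induction k with
  | zero => exact (inferInstance : N.Normal)
  | succ k ih => exact @Subgroup.commutator_normal _ _ _ _ ih _

/-- if N is hypercentral in G then [G,N] ≤ Φ(G) ∩ N. -/
theorem commutator_le_frattini_of_hypercentral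
    {G : Type} [Group G] [Fintype G] (N : Subgroup G) [N.Normal]
    (h : ∃ r : ℕ, gammaG N r = ⊥) :
    ⁅(⊤ : Subgroup G), N⁆ ≤ frattini G ⊓ N := by
  refine le_inf ?_ (Subgroup.commutator_le_right _ _)
  rw [frattini, Order.radical]
  refine le_iInf₂ fun M hM => ?_
  by_contra h1
  obtain ⟨r, hr⟩ := h
  have key1 : ∀ i, 1 ≤ i → ¬ gammaG N i ≤ M := by
    intro i hi
    induction i with
    | zero => omega
    | succ k ih =>
      rcases Nat.eq_zero_or_pos k with hk | hk
      · subst hk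
        intro hle
        exact h1 (le_trans (le_of_eq (Subgroup.commutator_comm _ _)) hle)
      · intro hle
        have hkM := ih hk
        have hnorm := gammaG_normal N k
        have htop : ⁅(⊤ : Subgroup G), (⊤ : Subgroup G)⁆ ≤ M :=
          key_lemma hM hkM hle
        refine h1 ?_
        calc ⁅(⊤ : Subgroup G), N⁆ ≤ ⁅(⊤ : Subgroup G), (⊤ : Subgroup G)⁆ :=
              Subgroup.commutator_mono le_rfl le_top
          _ ≤ M := htop
  refine key1 (r + 1) (by omega) ?_
  show ⁅gammaG N r, (⊤ : Subgroup G)⁆ ≤ M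
  rw [hr, Subgroup.commutator_bot_left]
  exact bot_le
end CT
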